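/- Let t ∈ [0,1], let τ : [0,1] → ℝ be a measurable function, and let F₁, F₂ : ℝ → [0,1] be nondecreasing functions. For i = 1, 2 set pᵢ := ∫₀ᵗ (1 − Fᵢ(τ(s))) ds. Then ∫₀ᵗ (1 − F₁(τ(s))·F₂(τ(s))) ds ≤ 1 − (1 − p₁)·(1 − p₂). -/

import Mathlib

open MeasureTheory

/-- Chebyshev-type correlation inequality for similarly ordered functions. -/
lemma cheb_aux {μ : Measure ℝ} [IsFiniteMeasure μ] (f g : ℝ → ℝ)
    (hf : Integrable f μ) (hg : Integrable g μ)
    (hfg : Integrable (fun x => f x * g x) μ)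
    (hmono : ∀ x y, 0 ≤ (f x - f y) * (g x - g y)) :
    (∫ x, f x ∂μ) * (∫ x, g x ∂μ) ≤ (μ Set.univ).toReal * ∫ x, f x * g x ∂μ := by
  set T := (μ Set.univ).toReal with hT
  set I := ∫ x, f x ∂μ with hI
  set J := ∫ x, g x ∂μ with hJ
  set K := ∫ x, f x * g x ∂μ with hK
  have key : ∀ x, 0 ≤ f x * g x * T - f x * J - g x * I + K := by
    intro x
    have h0 : 0 ≤ ∫ y, (f x - f y) * (g x - g y) ∂μ :=
      integral_nonneg fun y => hmono x y
    have hrw : (fun y => (f x - f y) * (g x - g y))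
        = fun y => (f x * g x - f x * g y - g x * f y) + f y * g y := by
      funext y; ring
    have i1 : Integrable (fun y => f x * g y) μ := hg.const_mul _
    have i2 : Integrable (fun y => g x * f y) μ := hf.const_mul _
    have i3 : Integrable (fun y => f x * g x - f x * g y) μ := (integrable_const _).sub i1
    have i4 : Integrable (fun y => f x * g x - f x * g y - g x * f y) μ := i3.sub i2
    have heq : ∫ y, (f x - f y) * (g x - g y) ∂μ
        = f x * g x * T - f x * J - g x * I + K := by
      rw [hrw, integral_add i4 hfg, integral_sub i3 i2,
        integral_sub (integrable_const _) i1,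
        integral_const, measureReal_def, ← hT, integral_const_mul, integral_const_mul, smul_eq_mul]
      ring
    rw [heq] at h0
    linarith
  have h2 : 0 ≤ ∫ x, (f x * g x * T - f x * J - g x * I + K) ∂μ :=
    integral_nonneg key
  have j1 : Integrable (fun x => f x * g x * T) μ := hfg.mul_const _
  have j2 : Integrable (fun x => f x * J) μ := hf.mul_const _
  have j3 : Integrable (fun x => g x * I) μ := hg.mul_const _
  have j4 : Integrable (fun x => f x * g x * T - f x * J) μ := j1.sub j2
  have j5 : Integrable (fun x => f x * g x * T - f x * J - g x * I) μ := j4.sub j3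
  have h3 : ∫ x, (f x * g x * T - f x * J - g x * I + K) ∂μ
      = K * T - I * J - J * I + T * K := by
    rw [integral_add j5 (integrable_const _), integral_sub j4 j3, integral_sub j1 j2,
      integral_mul_const, integral_mul_const, integral_mul_const,
      integral_const, measureReal_def, ← hT, smul_eq_mul]
  rw [h3] at h2
  linarith

/-- **Lemma 2.2.** Replacing two independent rewards by a single reward distributed as their
maximum decreases the probability of stopping before any time `t`. -/
theorem stmt0
    (t : ℝ) (ht : t ∈ Set.Icc (0:ℝ) 1)
    (τ : ℝ → ℝ) (hτ : Measurable τ)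
    (F₁ F₂ : ℝ → ℝ) (hF₁mono : Monotone F₁) (hF₂mono : Monotone F₂)
    (hF₁ : ∀ x, F₁ x ∈ Set.Icc (0:ℝ) 1) (hF₂ : ∀ x, F₂ x ∈ Set.Icc (0:ℝ) 1)
    (p₁ p₂ : ℝ)
    (hp₁ : p₁ = ∫ s in (0:ℝ)..t, (1 - F₁ (τ s)))
    (hp₂ : p₂ = ∫ s in (0:ℝ)..t, (1 - F₂ (τ s))) :
    (∫ s in (0:ℝ)..t, (1 - F₁ (τ s) * F₂ (τ s))) ≤ 1 - (1 - p₁) * (1 - p₂) := by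
  obtain ⟨ht0, ht1⟩ := ht
  set μ := volume.restrict (Set.Ioc (0:ℝ) t) with hμ
  haveI : IsFiniteMeasure μ := by
    constructor
    rw [hμ, Measure.restrict_apply_univ, Real.volume_Ioc]
    exact ENNReal.ofReal_lt_top
  set f : ℝ → ℝ := fun s => 1 - F₁ (τ s) with hf
  set g : ℝ → ℝ := fun s => 1 - F₂ (τ s) with hg
  have hfm : Measurable f := measurable_const.sub ((hF₁mono.measurable).comp hτ)
  have hgm : Measurable g := measurable_const.sub ((hF₂mono.measurable).comp hτ)
  have hfb : ∀ s, 0 ≤ f s ∧ f s ≤ 1 := fun s =>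
    ⟨by have h := (hF₁ (τ s)).2; show (0:ℝ) ≤ 1 - F₁ (τ s); linarith,
     by have h := (hF₁ (τ s)).1; show (1:ℝ) - F₁ (τ s) ≤ 1; linarith⟩
  have hgb : ∀ s, 0 ≤ g s ∧ g s ≤ 1 := fun s =>
    ⟨by have h := (hF₂ (τ s)).2; show (0:ℝ) ≤ 1 - F₂ (τ s); linarith,
     by have h := (hF₂ (τ s)).1; show (1:ℝ) - F₂ (τ s) ≤ 1; linarith⟩
  have hfint : Integrable f μ := by
    refine Integrable.mono' (integrable_const 1) hfm.aestronglyMeasurable ?_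
    filter_upwards with s
    rw [Real.norm_eq_abs, abs_le]
    exact ⟨by linarith [(hfb s).1], (hfb s).2⟩
  have hgint : Integrable g μ := by
    refine Integrable.mono' (integrable_const 1) hgm.aestronglyMeasurable ?_
    filter_upwards with s
    rw [Real.norm_eq_abs, abs_le]
    exact ⟨by linarith [(hgb s).1], (hgb s).2⟩
  have hfgint : Integrable (fun s => f s * g s) μ := by
    refine Integrable.mono' (integrable_const 1) (hfm.mul hgm).aestronglyMeasurable ?_
    filter_upwards with s
    rw [Real.norm_eq_abs, abs_le]
    constructor
    · nlinarith [(hfb s).1, (hgb s).1]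
    · nlinarith [(hfb s).1, (hfb s).2, (hgb s).1, (hgb s).2]
  have hmono : ∀ x y, 0 ≤ (f x - f y) * (g x - g y) := by
    intro x y
    have hfd : f x - f y = F₁ (τ y) - F₁ (τ x) := by
      show (1 - F₁ (τ x)) - (1 - F₁ (τ y)) = _; ring
    have hgd : g x - g y = F₂ (τ y) - F₂ (τ x) := by
      show (1 - F₂ (τ x)) - (1 - F₂ (τ y)) = _; ring
    rw [hfd, hgd]
    rcases le_total (τ x) (τ y) with h | h
    · exact mul_nonneg (by linarith [hF₁mono h]) (by linarith [hF₂mono h])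
    · exact mul_nonneg_of_nonpos_of_nonpos (by linarith [hF₁mono h]) (by linarith [hF₂mono h])
  set I := ∫ x, f x ∂μ with hI
  set J := ∫ x, g x ∂μ with hJ
  set K := ∫ x, f x * g x ∂μ with hK
  have hT : (μ Set.univ).toReal = t := by
    rw [hμ, Measure.restrict_apply_univ, Real.volume_Ioc, sub_zero,
      ENNReal.toReal_ofReal ht0]
  have hcheb : I * J ≤ t * K := by
    have h := cheb_aux f g hfint hgint hfgint hmono
    rwa [hT] at h
  have hKnn : 0 ≤ K := integral_nonneg fun s => mul_nonneg (hfb s).1 (hgb s).1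
  have hIJK : I * J ≤ K := le_trans hcheb (by nlinarith)
  have hp₁' : p₁ = I := by
    rw [hp₁, intervalIntegral.integral_of_le ht0, hI]
  have hp₂' : p₂ = J := by
    rw [hp₂, intervalIntegral.integral_of_le ht0, hJ]
  have iadd : Integrable (fun s => f s + g s) μ := hfint.add hgint
  have hLHS : (∫ s in (0:ℝ)..t, (1 - F₁ (τ s) * F₂ (τ s))) = I + J - K := by
    rw [intervalIntegral.integral_of_le ht0]
    have hrw : (fun s => 1 - F₁ (τ s) * F₂ (τ s))
        = fun s => (f s + g s) - f s * g s := by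
      funext s
      show 1 - F₁ (τ s) * F₂ (τ s)
          = ((1 - F₁ (τ s)) + (1 - F₂ (τ s))) - (1 - F₁ (τ s)) * (1 - F₂ (τ s))
      ring
    rw [hrw, integral_sub iadd hfgint, integral_add hfint hgint]
  rw [hLHS, hp₁', hp₂']
  nlinarith
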